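/- There exist constants c₀ > 0 and C > 0, depending only on k, such that the following holds. Let M > 0, 0 ≤ β ≤ 1/2 with Mβ ≤ c₀, and let B ∈ ℝ^{k×k} satisfy: (i) Bᵀ1_k = 1_k (each column of B sums to 1); (ii) ‖B‖₂ ≤ M; (iii) for every row index f ∈ {1,…,k} there exist λ_f ≥ 0 and an index i_f ∈ {1,…,k} such that ‖B(f,:) − λ_f e_{i_f}‖₂ ≤ β λ_f. Then there exists a k×k permutation matrix Π with ‖B − Π‖₂ ≤ C M β. -/

import Mathlib

open scoped BigOperators ENNReal NNReal
open MeasureTheory Matrix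

noncomputable section

/-- Euclidean (ℓ²) norm of a vector in `Fin m → ℝ`. -/
def l2 {m : ℕ} (x : Fin m → ℝ) : ℝ := Real.sqrt (∑ i, x i ^ 2)

/-- The `f`-th standard basis vector of `ℝ^k`. -/
def eVec (k : ℕ) (f : Fin k) : Fin k → ℝ := fun i => if i = f then 1 else 0

/-- Spectral norm (largest singular value) of a matrix. -/
def specNorm {p q : ℕ} (A : Matrix (Fin p) (Fin q) ℝ) : ℝ :=
  ‖LinearMap.toContinuousLinearMap (Matrix.toEuclideanLin A)‖

/-- `dis(C, C̄)`: minimum over column permutations of the spectral norm of the difference. -/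
def dis {p q : ℕ} (C Cb : Matrix (Fin p) (Fin q) ℝ) : ℝ :=
  ⨅ σ : Equiv.Perm (Fin q), specNorm (Cb - C.submatrix id ⇑σ)

/-- Permutation matrix of a permutation `σ`. -/
def permMat {k : ℕ} (σ : Equiv.Perm (Fin k)) : Matrix (Fin k) (Fin k) ℝ :=
  Matrix.of fun i j => if i = σ j then 1 else 0

lemma coord_le_l2 {m : ℕ} (x : Fin m → ℝ) (j : Fin m) : |x j| ≤ l2 x := by
  rw [l2, ← Real.sqrt_sq_eq_abs]
  exact Real.sqrt_le_sqrt (Finset.single_le_sum (fun i _ => sq_nonneg (x i)) (Finset.mem_univ j))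

lemma specNorm_le_frob {p q : ℕ} (A : Matrix (Fin p) (Fin q) ℝ) :
    specNorm A ≤ Real.sqrt (∑ i, ∑ j, A i j ^ 2) := by
  apply ContinuousLinearMap.opNorm_le_bound _ (Real.sqrt_nonneg _)
  intro x
  rw [LinearMap.coe_toContinuousLinearMap']
  have hx : ‖x‖ = Real.sqrt (∑ j, x j ^ 2) := by
    rw [EuclideanSpace.norm_eq]
    congr 1
    refine Finset.sum_congr rfl fun j _ => by rw [Real.norm_eq_abs, sq_abs]
  rw [EuclideanSpace.norm_eq, hx, ← Real.sqrt_mul (by positivity)]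
  apply Real.sqrt_le_sqrt
  rw [Finset.sum_mul]
  apply Finset.sum_le_sum
  intro i _
  have hcoord : (toEuclideanLin A x) i = ∑ j, A i j * x j := by
    have h2 := congrFun (Matrix.ofLp_toEuclideanLin_apply A x) i
    simpa [Matrix.mulVec, dotProduct] using h2
  rw [Real.norm_eq_abs, sq_abs, hcoord]
  exact Finset.sum_mul_sq_le_sq_mul_sq Finset.univ (fun j => A i j) (fun j => x j)

lemma abs_entry_le_specNorm {p q : ℕ} (A : Matrix (Fin p) (Fin q) ℝ) (i : Fin p) (j : Fin q) :
    |A i j| ≤ specNorm A := by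
  have h := (LinearMap.toContinuousLinearMap (Matrix.toEuclideanLin A)).le_opNorm
    (EuclideanSpace.single j 1)
  rw [EuclideanSpace.norm_single, norm_one, mul_one] at h
  refine le_trans ?_ h
  rw [LinearMap.coe_toContinuousLinearMap']
  have hcoord : (toEuclideanLin A (EuclideanSpace.single j 1)) i = A i j := by
    have h2 := congrFun (Matrix.ofLp_toEuclideanLin_apply A (EuclideanSpace.single j 1)) i
    simp only [Matrix.mulVec, dotProduct,
      EuclideanSpace.single_apply, mul_ite, mul_one, mul_zero,
      Finset.sum_ite_eq', Finset.mem_univ, if_true] at h2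
    exact h2
  calc |A i j| = ‖(toEuclideanLin A (EuclideanSpace.single j 1)) i‖ := by
        rw [hcoord, Real.norm_eq_abs]
    _ ≤ ‖toEuclideanLin A (EuclideanSpace.single j 1)‖ := by
        rw [EuclideanSpace.norm_eq,
          show ‖(toEuclideanLin A (EuclideanSpace.single j 1)) i‖
            = Real.sqrt (‖(toEuclideanLin A (EuclideanSpace.single j 1)) i‖ ^ 2) from
            (Real.sqrt_sq (norm_nonneg _)).symm]
        apply Real.sqrt_le_sqrt
        exact Finset.single_le_sum
          (f := fun b => ‖(toEuclideanLin A (EuclideanSpace.single j 1)) b‖ ^ 2)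
          (fun b _ => sq_nonneg _) (Finset.mem_univ i)

/-- A matrix with unit column sums, bounded spectral norm, and rows close to nonnegative
multiples of standard basis vectors, is close to a permutation matrix. -/
theorem stmt12 {k : ℕ} :
    ∃ c₀ C : ℝ, 0 < c₀ ∧ 0 < C ∧
      ∀ (M β : ℝ), 0 < M → 0 ≤ β → β ≤ 1 / 2 → M * β ≤ c₀ →
        ∀ B : Matrix (Fin k) (Fin k) ℝ,
          (∀ j, ∑ i, B i j = 1) →
          specNorm B ≤ M →
          (∀ f : Fin k, ∃ (lam : ℝ) (i : Fin k), 0 ≤ lam ∧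
            l2 (B f - lam • eVec k i) ≤ β * lam) →
          ∃ σ : Equiv.Perm (Fin k), specNorm (B - permMat σ) ≤ C * M * β := by
  refine ⟨1 / (4 * ((k : ℝ) + 1)), 4 * ((k : ℝ) + 1) ^ 2, by positivity, by positivity, ?_⟩
  intro M β hM hβ hβ2 hMβ B hcol hB h3
  choose lam idx hlam hrow using h3
  have hMβ0 : 0 ≤ M * β := mul_nonneg hM.le hβ
  have hoff : ∀ f j, j ≠ idx f → |B f j| ≤ β * lam f := by
    intro f j hj
    have h := (coord_le_l2 (B f - lam f • eVec k (idx f)) j).trans (hrow f)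
    simpa [eVec, hj] using h
  have hdiag : ∀ f, |B f (idx f) - lam f| ≤ β * lam f := by
    intro f
    have h := (coord_le_l2 (B f - lam f • eVec k (idx f)) (idx f)).trans (hrow f)
    simpa [eVec] using h
  have hlam2 : ∀ f, lam f ≤ 2 * M := by
    intro f
    have h1 : |B f (idx f)| ≤ M := (abs_entry_le_specNorm B f (idx f)).trans hB
    have h2 := abs_le.mp (hdiag f)
    have h1' := (abs_le.mp h1).2
    nlinarith [hlam f]
  have hbl : ∀ f, β * lam f ≤ 2 * (M * β) := by
    intro f
    have := hlam2 f
    nlinarith [hlam f]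
  have hsurj : Function.Surjective idx := by
    intro j
    by_contra hj
    push_neg at hj
    have h1 : (1 : ℝ) = ∑ f, B f j := (hcol j).symm
    have h2 : ∑ f, B f j ≤ ∑ _f : Fin k, 2 * (M * β) := by
      refine Finset.sum_le_sum fun f _ => ?_
      exact (le_abs_self _).trans ((hoff f j fun h => hj f h.symm).trans (hbl f))
    rw [Finset.sum_const, Finset.card_univ, Fintype.card_fin, nsmul_eq_mul] at h2
    have hk1 : (0 : ℝ) < (k : ℝ) + 1 := by positivity
    rw [le_div_iff₀ (by positivity)] at hMβ
    have h3 : (1 : ℝ) ≤ (k : ℝ) * (2 * (M * β)) := le_trans (le_of_eq h1) h2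
    nlinarith [h3, hMβ, hMβ0, Nat.cast_nonneg (α := ℝ) k]
  have hinj : Function.Injective idx := Finite.injective_iff_surjective.mpr hsurj
  let τ : Equiv.Perm (Fin k) := Equiv.ofBijective idx ⟨hinj, hsurj⟩
  refine ⟨τ.symm, ?_⟩
  have hτ : ∀ f, τ f = idx f := fun f => rfl
  have hlam1 : ∀ f, |lam f - 1| ≤ 2 * ((k : ℝ) + 1) * (M * β) := by
    intro f
    have hcolf : B f (idx f) + ∑ g ∈ Finset.univ.erase f, B g (idx f) = 1 := by
      rw [← hcol (idx f)]
      exact Finset.add_sum_erase Finset.univ (fun g => B g (idx f)) (Finset.mem_univ f)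
    have hrest : |∑ g ∈ Finset.univ.erase f, B g (idx f)| ≤ (k : ℝ) * (2 * (M * β)) := by
      refine (Finset.abs_sum_le_sum_abs _ _).trans ?_
      have hb : ∀ g ∈ Finset.univ.erase f, |B g (idx f)| ≤ 2 * (M * β) := by
        intro g hg
        have hgf : g ≠ f := Finset.ne_of_mem_erase hg
        have : idx f ≠ idx g := fun h => hgf (hinj h.symm)
        exact (hoff g (idx f) this).trans (hbl g)
      refine (Finset.sum_le_sum hb).trans ?_
      rw [Finset.sum_const, nsmul_eq_mul]
      have : ((Finset.univ.erase f).card : ℝ) ≤ (k : ℝ) := by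
        have := Finset.card_erase_le (s := (Finset.univ : Finset (Fin k))) (a := f)
        calc ((Finset.univ.erase f).card : ℝ) ≤ (Finset.univ : Finset (Fin k)).card := by
              exact_mod_cast this
          _ = (k : ℝ) := by simp
      nlinarith
    have h2 := abs_le.mp (hdiag f)
    have h3 := abs_le.mp hrest
    have h4 := hbl f
    rw [abs_le]
    constructor <;> nlinarith
  have hent : ∀ f j, |(B - permMat τ.symm) f j| ≤ 2 * ((k : ℝ) + 2) * (M * β) := by
    intro f j
    rw [Matrix.sub_apply]
    by_cases hj : j = idx f
    · subst hj
      have hπ : permMat τ.symm f (idx f) = 1 := by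
        have : τ.symm (idx f) = f := by rw [← hτ f, Equiv.symm_apply_apply]
        simp [permMat, this]
      rw [hπ]
      have h2 := abs_le.mp (hdiag f)
      have h3 := abs_le.mp (hlam1 f)
      have h4 := hbl f
      rw [abs_le]
      constructor <;> nlinarith
    · have hπ : permMat τ.symm f j = 0 := by
        have : τ.symm j ≠ f := by
          intro h
          exact hj (by rw [← hτ f, ← h, Equiv.apply_symm_apply])
        have hne : ¬ f = τ.symm j := fun h => this h.symm
        simp [permMat, hne]
      rw [hπ, sub_zero]
      have := (hoff f j hj).trans (hbl f)
      nlinarith [Nat.cast_nonneg (α := ℝ) k]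
  have hfb := specNorm_le_frob (B - permMat τ.symm)
  have hE : (0 : ℝ) ≤ 2 * ((k : ℝ) + 2) * (M * β) := by positivity
  have hsum : ∑ i, ∑ j, (B - permMat τ.symm) i j ^ 2
      ≤ ((k : ℝ) * (2 * ((k : ℝ) + 2) * (M * β))) ^ 2 := by
    have : ∀ i : Fin k, ∑ j, (B - permMat τ.symm) i j ^ 2
        ≤ (k : ℝ) * (2 * ((k : ℝ) + 2) * (M * β)) ^ 2 := by
      intro i
      have : ∑ j, (B - permMat τ.symm) i j ^ 2
          ≤ ∑ _j : Fin k, (2 * ((k : ℝ) + 2) * (M * β)) ^ 2 := by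
        refine Finset.sum_le_sum fun j _ => ?_
        rw [← sq_abs]
        exact pow_le_pow_left₀ (abs_nonneg _) (hent i j) 2
      simpa [Finset.sum_const, nsmul_eq_mul] using this
    refine (Finset.sum_le_sum fun i (_ : i ∈ Finset.univ) => this i).trans ?_
    rw [Finset.sum_const, Finset.card_univ, Fintype.card_fin, nsmul_eq_mul]
    nlinarith [Nat.cast_nonneg (α := ℝ) k, sq_nonneg (2 * ((k : ℝ) + 2) * (M * β))]
  have hfinal : specNorm (B - permMat τ.symm) ≤ (k : ℝ) * (2 * ((k : ℝ) + 2) * (M * β)) := by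
    refine hfb.trans ?_
    rw [show ((k : ℝ) * (2 * ((k : ℝ) + 2) * (M * β)))
        = Real.sqrt (((k : ℝ) * (2 * ((k : ℝ) + 2) * (M * β))) ^ 2) from
        (Real.sqrt_sq (by positivity)).symm]
    exact Real.sqrt_le_sqrt hsum
  refine hfinal.trans ?_
  have hk0 : (0 : ℝ) ≤ (k : ℝ) := Nat.cast_nonneg k
  nlinarith [hMβ0, hk0, mul_nonneg hk0 hMβ0]
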